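/- Let N ≥ 2 and let W be the real N×N matrix of a directed circle: W(1, N) = w_{1,N} ≠ 0, W(i, i−1) = w_{i,i−1} ≠ 0 for i = 2, …, N, and all other entries zero; then W has N pairwise distinct complex eigenvalues, each with one-dimensional left eigenspace. Let Δ_1 = diag(1, 0, …, 0). Assume: (2) for every complex eigenvalue λ of W, the pair (E_λ, 𝓑(h)) satisfies the PBH condition; (3) for every θ ∈ ℂ, every choice of nonzero left eigenvectors v_λ ∈ ℂ^{1×N} of W (one for each complex eigenvalue λ of W), and every family of row vectors ξ_λ ∈ ℂ^{1×n} with ξ_λ·(θI − E_λ) = 0 for every eigenvalue λ and not all ξ_λ zero, one has (Σ_λ v_λ ⊗ ξ_λ)·(Δ_1 ⊗ 𝓑(h)) ≠ 0. Then the networked sampled-data system (Φ_s, Δ_1 ⊗ 𝓑(h)) is controllable. -/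

import Mathlib

open Matrix
open scoped Kronecker

/-- Entrywise complexification of a real matrix. -/
noncomputable def cpx {a b : Type*} (M : Matrix a b ℝ) : Matrix a b ℂ :=
  M.map (Complex.ofReal)

/-- The matrix exponential `e^{M}`. -/
noncomputable def mexp {q : Type*} [Fintype q] [DecidableEq q]
    (M : Matrix q q ℝ) : Matrix q q ℝ :=
  NormedSpace.exp M

/-- The entrywise integral `∫₀ʰ e^{Aτ} dτ`. -/
noncomputable def intExp {q : Type*} [Fintype q] [DecidableEq q]
    (A : Matrix q q ℝ) (h : ℝ) : Matrix q q ℝ :=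
  Matrix.of fun i j => ∫ τ in (0:ℝ)..h, (NormedSpace.exp (τ • A)) i j

/-- `θ` is an eigenvalue of the complex square matrix `M`. -/
def IsEig {q : Type*} [Fintype q] [DecidableEq q] (M : Matrix q q ℂ) (θ : ℂ) : Prop :=
  (θ • (1 : Matrix q q ℂ) - M).det = 0

/-- PBH condition for a pair of complex matrices: for every `s ∈ ℂ`, the only row
vector `v` with `v (sI - M) = 0` and `v G = 0` is `v = 0`. -/
def PBH {q r : Type*} [Fintype q] [DecidableEq q] [Fintype r]
    (M : Matrix q q ℂ) (G : Matrix q r ℂ) : Prop :=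
  ∀ (s : ℂ) (v : q → ℂ), v ᵥ* (s • (1 : Matrix q q ℂ) - M) = 0 → v ᵥ* G = 0 → v = 0

/-- Controllability of a discrete-time linear system `x⁺ = F x + G u`:
every state can be steered to the origin in finitely many steps. -/
def Controllable {q r : Type*} [Fintype q] [DecidableEq q] [Fintype r]
    (F : Matrix q q ℝ) (G : Matrix q r ℝ) : Prop :=
  ∀ x : q → ℝ, ∃ (k : ℕ) (u : Fin k → r → ℝ),
    (F ^ k) *ᵥ x + ∑ j : Fin k, (F ^ (k - 1 - (j : ℕ))) *ᵥ (G *ᵥ u j) = 0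

/-- `𝓑(h) = (∫₀ʰ e^{Aτ} dτ)·B`. -/
noncomputable def sampB {n p : ℕ} (A : Matrix (Fin n) (Fin n) ℝ)
    (B : Matrix (Fin n) (Fin p) ℝ) (h : ℝ) : Matrix (Fin n) (Fin p) ℝ :=
  intExp A h * B

/-- `𝓗(h) = (∫₀ʰ e^{Aτ} dτ)·H·C`. -/
noncomputable def sampH {n m : ℕ} (A : Matrix (Fin n) (Fin n) ℝ)
    (H : Matrix (Fin n) (Fin m) ℝ) (C : Matrix (Fin m) (Fin n) ℝ) (h : ℝ) :
    Matrix (Fin n) (Fin n) ℝ :=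
  intExp A h * H * C

/-- `Φ_s = I_N ⊗ e^{Ah} + W ⊗ 𝓗(h)`. -/
noncomputable def Phis {n m N : ℕ} (A : Matrix (Fin n) (Fin n) ℝ)
    (H : Matrix (Fin n) (Fin m) ℝ) (C : Matrix (Fin m) (Fin n) ℝ)
    (W : Matrix (Fin N) (Fin N) ℝ) (h : ℝ) :
    Matrix (Fin N × Fin n) (Fin N × Fin n) ℝ :=
  (1 : Matrix (Fin N) (Fin N) ℝ) ⊗ₖ mexp (h • A) + W ⊗ₖ sampH A H C h

/-- `E_λ = e^{Ah} + λ·𝓗(h)` (complexified). -/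
noncomputable def Emat {n m : ℕ} (A : Matrix (Fin n) (Fin n) ℝ)
    (H : Matrix (Fin n) (Fin m) ℝ) (C : Matrix (Fin m) (Fin n) ℝ)
    (h : ℝ) (lam : ℂ) : Matrix (Fin n) (Fin n) ℂ :=
  cpx (mexp (h • A)) + lam • cpx (sampH A H C h)

/-! ### generic vecMul helpers -/

section helpers
variable {α : Type*} [CommRing α]

lemma vecMul_sumM {a b ι : Type*} [Fintype a] (s : Finset ι) (x : a → α)
    (f : ι → Matrix a b α) : x ᵥ* (∑ i ∈ s, f i) = ∑ i ∈ s, x ᵥ* f i := by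
  ext j
  simp only [Matrix.vecMul, dotProduct, Finset.sum_apply, Matrix.sum_apply,
    Finset.mul_sum]
  rw [Finset.sum_comm]

lemma sum_vecMulM {a b ι : Type*} [Fintype a] (s : Finset ι) (x : ι → a → α)
    (M : Matrix a b α) : (∑ i ∈ s, x i) ᵥ* M = ∑ i ∈ s, x i ᵥ* M := by
  ext j
  simp only [Matrix.vecMul, dotProduct, Finset.sum_apply, Finset.sum_mul]
  rw [Finset.sum_comm]

lemma vecMul_smulM {a b : Type*} [Fintype a] (c : α) (x : a → α) (M : Matrix a b α) :
    x ᵥ* (c • M) = c • (x ᵥ* M) := by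
  ext j
  simp only [Matrix.vecMul, dotProduct, Matrix.smul_apply, Pi.smul_apply,
    smul_eq_mul, Finset.mul_sum]
  exact Finset.sum_congr rfl fun i _ => by ring

/-- vecMul of an elementary tensor against a Kronecker product. -/
lemma kron_vecMul {a b c d : Type*} [Fintype a] [Fintype c]
    (v : a → α) (ξ : c → α) (M : Matrix a b α) (K : Matrix c d α) :
    (fun q : a × c => v q.1 * ξ q.2) ᵥ* (M ⊗ₖ K)
      = fun q : b × d => (v ᵥ* M) q.1 * (ξ ᵥ* K) q.2 := by
  ext ⟨j, e⟩
  simp only [Matrix.vecMul, dotProduct, Matrix.kroneckerMap_apply]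
  rw [Fintype.sum_prod_type, Finset.sum_mul_sum]
  refine Finset.sum_congr rfl fun i _ => Finset.sum_congr rfl fun k _ => by ring

end helpers

/-! ### complexification helpers -/

lemma cpx_mul {a b c : Type*} [Fintype b] (M : Matrix a b ℝ) (K : Matrix b c ℝ) :
    cpx (M * K) = cpx M * cpx K := by
  ext i j
  simp [cpx, Matrix.mul_apply]

lemma cpx_pow {a : Type*} [Fintype a] [DecidableEq a] (M : Matrix a a ℝ) (i : ℕ) :
    cpx (M ^ i) = cpx M ^ i := by
  induction i with
  | zero => ext i j; simp [cpx, Matrix.one_apply, apply_ite]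
  | succ k ih => rw [pow_succ, pow_succ, cpx_mul, ih]

lemma cpx_vecMul {a b : Type*} [Fintype a] (x : a → ℝ) (M : Matrix a b ℝ) :
    (fun j => ((x ᵥ* M) j : ℂ)) = (fun i => (x i : ℂ)) ᵥ* cpx M := by
  ext j
  simp [Matrix.vecMul, dotProduct, cpx]

lemma cpx_add {a b : Type*} (M K : Matrix a b ℝ) : cpx (M + K) = cpx M + cpx K := by
  ext i j
  simp [cpx]

lemma cpx_one {a : Type*} [Fintype a] [DecidableEq a] :
    cpx (1 : Matrix a a ℝ) = 1 := by
  ext i j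
  simp [cpx, Matrix.one_apply, apply_ite]

lemma cpx_kron {a b c d : Type*} (M : Matrix a b ℝ) (K : Matrix c d ℝ) :
    cpx (M ⊗ₖ K) = cpx M ⊗ₖ cpx K := by
  ext ⟨i, k⟩ ⟨j, l⟩
  simp [cpx, Matrix.kroneckerMap_apply]

open Polynomial in
lemma eval_charpoly' {q : Type*} [Fintype q] [DecidableEq q] (M : Matrix q q ℂ) (t : ℂ) :
    M.charpoly.eval t = (t • (1 : Matrix q q ℂ) - M).det := by
  rw [Matrix.charpoly, ← Polynomial.coe_evalRingHom, RingHom.map_det]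
  congr 1
  ext i j
  by_cases hij : i = j
  · subst hij
    simp [Matrix.charmatrix_apply_eq, Matrix.smul_apply, Matrix.one_apply]
  · simp [Matrix.charmatrix_apply_ne _ _ _ hij, Matrix.one_apply, hij]

/-! ### PBH implies controllability -/

section control
open Polynomial
variable {q r : Type*} [Fintype q] [DecidableEq q] [Fintype r] [DecidableEq r]

omit [Fintype r] [DecidableEq r] in
/-- Cayley–Hamilton: if `x` kills `F^i G` for `i < card q`, it kills all powers. -/
lemma vecMul_allpow (F : Matrix q q ℝ) (G : Matrix q r ℝ) (x : q → ℝ)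
    (hx : ∀ i, i < Fintype.card q → x ᵥ* (F ^ i * G) = 0) :
    ∀ i, x ᵥ* (F ^ i * G) = 0 := by
  rcases isEmpty_or_nonempty q with hq | hq
  · intro i; ext b; simp [Matrix.vecMul, dotProduct]
  set d := Fintype.card q with hd
  have hd0 : 0 < d := Fintype.card_pos
  set p := F.charpoly with hp
  have hdeg : p.natDegree = d := F.charpoly_natDegree_eq_dim
  have hCH : aeval F p = 0 := F.aeval_self_charpoly
  have hsum : (0 : Matrix q q ℝ) = ∑ i ∈ Finset.range (d + 1), p.coeff i • F ^ i := by
    rw [← hCH, Polynomial.aeval_eq_sum_range' (by omega : p.natDegree < d + 1)]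
  have htop : F ^ d = -(∑ i ∈ Finset.range d, p.coeff i • F ^ i) := by
    have h1 : p.coeff d = 1 := by
      have := F.charpoly_monic
      rw [Polynomial.Monic] at this
      rw [← hdeg]; exact this
    have h3 := hsum
    rw [Finset.sum_range_succ, h1, one_smul] at h3
    exact eq_neg_of_add_eq_zero_left (by rw [add_comm]; exact h3.symm)
  intro i
  induction i using Nat.strong_induction_on with
  | _ i ih =>
    by_cases hid : i < d
    · exact hx i hid
    · push_neg at hid
      have h1 : F ^ i * G = F ^ (i - d) * (F ^ d * G) := by
        rw [← Matrix.mul_assoc, ← pow_add]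
        congr 2
        omega
      rw [h1, htop]
      have h2 : -(∑ j ∈ Finset.range d, p.coeff j • F ^ j) * G
          = ∑ j ∈ Finset.range d, (-(p.coeff j)) • (F ^ j * G) := by
        rw [Matrix.neg_mul, Matrix.sum_mul, ← Finset.sum_neg_distrib]
        refine Finset.sum_congr rfl fun j _ => ?_
        rw [Matrix.smul_mul, neg_smul]
      rw [h2, Matrix.mul_sum, vecMul_sumM]
      refine Finset.sum_eq_zero fun j hj => ?_
      rw [Finset.mem_range] at hj
      rw [Matrix.mul_smul, vecMul_smulM, ← Matrix.mul_assoc, ← pow_add]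
      have := ih (i - d + j) (by omega)
      rw [this, smul_zero]

omit [DecidableEq r] in
/-- PBH implies that a covector killing all `F^i G` is zero. -/
lemma pbh_row (F : Matrix q q ℝ) (G : Matrix q r ℝ)
    (hpbh : PBH (cpx F) (cpx G)) (x : q → ℝ)
    (hx : ∀ i : ℕ, x ᵥ* (F ^ i * G) = 0) : x = 0 := by
  by_contra hx0
  set Fc := cpx F with hFc
  set Gc := cpx G with hGc
  set U : Submodule ℂ (q → ℂ) :=
    { carrier := {u | ∀ i : ℕ, u ᵥ* (Fc ^ i * Gc) = 0}
      add_mem' := fun {u} {v} hu hv i => by rw [Matrix.add_vecMul, hu i, hv i, add_zero]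
      zero_mem' := fun i => Matrix.zero_vecMul _
      smul_mem' := fun c {u} hu i => by rw [Matrix.smul_vecMul, hu i, smul_zero] } with hU
  have hxc : (fun i => (x i : ℂ)) ∈ U := by
    intro i
    have := hx i
    have h2 : (fun j => ((x ᵥ* (F ^ i * G)) j : ℂ)) = (fun i => (x i : ℂ)) ᵥ* (Fc ^ i * Gc) := by
      rw [cpx_vecMul, cpx_mul, cpx_pow]
    rw [this] at h2
    rw [← h2]
    ext j; simp
  have hxcne : (fun i => (x i : ℂ)) ≠ 0 := by
    intro hc
    apply hx0
    ext i
    have := congrFun hc i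
    simpa using this
  have : Nontrivial U := ⟨⟨⟨_, hxc⟩, 0, by simp [Subtype.ext_iff, hxcne]⟩⟩
  set e : U →ₗ[ℂ] U :=
    { toFun := fun u => ⟨u.1 ᵥ* Fc, fun i => by
        rw [Matrix.vecMul_vecMul, ← Matrix.mul_assoc, ← pow_succ']
        exact u.2 (i + 1)⟩
      map_add' := fun u v => by
        apply Subtype.ext
        exact Matrix.add_vecMul _ _ _
      map_smul' := fun c u => by
        apply Subtype.ext
        exact Matrix.smul_vecMul _ _ _ } with he
  obtain ⟨c, hc⟩ := Module.End.exists_eigenvalue e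
  obtain ⟨u, hu⟩ := hc.exists_hasEigenvector
  have heu : u.1 ᵥ* Fc = c • u.1 := by
    have := hu.apply_eq_smul
    have h2 := congrArg Subtype.val this
    exact h2
  have hug : u.1 ᵥ* Gc = 0 := by
    have := u.2 0
    simpa using this
  have : u.1 = 0 := by
    apply hpbh c u.1 _ hug
    rw [Matrix.vecMul_sub, vecMul_smulM, Matrix.vecMul_one, heu, sub_self]
  exact hu.2 (Subtype.ext this)

/-- The PBH condition for the complexification implies controllability. -/
lemma pbh_controllable [Nonempty q] (F : Matrix q q ℝ) (G : Matrix q r ℝ)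
    (hpbh : PBH (cpx F) (cpx G)) : Controllable F G := by
  have hrow : ∀ x : q → ℝ, (∀ i : ℕ, x ᵥ* (F ^ i * G) = 0) → x = 0 :=
    pbh_row F G hpbh
  have hall := vecMul_allpow F G
  intro x
  set d := Fintype.card q with hd
  have hd0 : 0 < d := Fintype.card_pos
  set Cm : Matrix q (Fin d × r) ℝ :=
    Matrix.of (fun i jb => (F ^ (d - 1 - (jb.1 : ℕ)) * G) i jb.2) with hCm
  have hinj : Function.Injective (Matrix.mulVecLin Cmᵀ) := by
    rw [← LinearMap.ker_eq_bot]
    ext v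
    simp only [LinearMap.mem_ker, Submodule.mem_bot, Matrix.mulVecLin_apply]
    constructor
    · intro hv
      have hvm : v ᵥ* Cm = 0 := by rwa [← Matrix.mulVec_transpose]
      apply hrow
      apply hall
      intro i hi
      ext b
      have := congrFun hvm (⟨d - 1 - i, by omega⟩, b)
      simp only [Pi.zero_apply] at this ⊢
      rw [← this]
      have he : d - 1 - ((⟨d - 1 - i, by omega⟩ : Fin d) : ℕ) = i := by
        simp only []
        omega
      simp only [Matrix.vecMul, dotProduct, hCm, Matrix.of_apply, he]
    · intro hv; rw [hv]; simp
  have hrank : Cm.rank = d := by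
    have h1 : Cmᵀ.rank = d := by
      rw [Matrix.rank]
      rw [LinearMap.finrank_range_of_inj hinj]
      simp [hd]
    rw [← Matrix.rank_transpose, h1]
  have hsurj : Function.Surjective (Matrix.mulVecLin Cm) := by
    rw [← LinearMap.range_eq_top]
    apply Submodule.eq_top_of_finrank_eq
    rw [← Matrix.rank, hrank]
    simp [hd]
  obtain ⟨uu, huu⟩ := hsurj (-(F ^ d *ᵥ x))
  rw [Matrix.mulVecLin_apply] at huu
  refine ⟨d, fun j b => uu (j, b), ?_⟩
  have hsum : ∑ j : Fin d, (F ^ (d - 1 - (j : ℕ))) *ᵥ (G *ᵥ fun b => uu (j, b))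
      = Cm *ᵥ uu := by
    ext i
    simp only [Matrix.mulVec_mulVec, Finset.sum_apply, Matrix.mulVec, dotProduct, hCm]
    rw [Fintype.sum_prod_type]
    simp
  rw [hsum, huu]
  simp

end control
noncomputable def wext (N : ℕ) (w : Fin N → ℝ) (i : ℕ) : ℂ :=
  if h : i < N then (w ⟨i, h⟩ : ℂ) else 1

noncomputable def evec (N : ℕ) (w : Fin N → ℝ) (μ : ℂ) : Fin N → ℂ :=
  fun j => μ ^ (j : ℕ) * (∏ i ∈ Finset.range (j : ℕ), wext N w i)⁻¹

section spec
variable {N : ℕ}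

lemma wext_ne (w : Fin N → ℝ) (hw : ∀ j, w j ≠ 0) (i : ℕ) : wext N w i ≠ 0 := by
  unfold wext
  split
  · simpa using hw _
  · exact one_ne_zero

lemma wprod_ne (w : Fin N → ℝ) (hw : ∀ j, w j ≠ 0) (k : ℕ) : (∏ i ∈ Finset.range k, wext N w i) ≠ 0 :=
  Finset.prod_ne_zero_iff.2 fun i _ => wext_ne w hw i

/-- the product of all the weights -/
noncomputable def Pc (w : Fin N → ℝ) : ℂ := ∏ i ∈ Finset.range N, wext N w i

lemma Pc_ne (w : Fin N → ℝ) (hw : ∀ j, w j ≠ 0) : Pc w ≠ 0 := wprod_ne w hw N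

lemma vecMul_cpxW (hN : 0 < N) (w : Fin N → ℝ) (W : Matrix (Fin N) (Fin N) ℝ)
    (hW : ∀ i j : Fin N, W i j = if (i : ℕ) = ((j : ℕ) + 1) % N then w j else 0)
    (u : Fin N → ℂ) (j : Fin N) :
    (u ᵥ* cpx W) j = u ⟨((j : ℕ) + 1) % N, Nat.mod_lt _ hN⟩ * (w j : ℂ) := by
  simp only [Matrix.vecMul, dotProduct, cpx, Matrix.map_apply, hW]
  rw [Finset.sum_eq_single (⟨((j : ℕ) + 1) % N, Nat.mod_lt _ hN⟩ : Fin N)]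
  · simp
  · intro i _ hne
    have : ¬ ((i : ℕ) = ((j : ℕ) + 1) % N) := by
      intro hcon
      apply hne
      exact Fin.ext hcon
    simp [this]
  · intro hmem
    exact absurd (Finset.mem_univ _) hmem

/-- eigen equation coordinatewise -/
lemma eig_coord_iff (hN : 0 < N) (w : Fin N → ℝ) (W : Matrix (Fin N) (Fin N) ℝ)
    (hW : ∀ i j : Fin N, W i j = if (i : ℕ) = ((j : ℕ) + 1) % N then w j else 0)
    (u : Fin N → ℂ) (μ : ℂ) :
    u ᵥ* cpx W = μ • u ↔
      ∀ j : Fin N, u ⟨((j : ℕ) + 1) % N, Nat.mod_lt _ hN⟩ * (w j : ℂ) = μ * u j := by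
  constructor
  · intro hu j
    have := congrFun hu j
    rw [vecMul_cpxW hN w W hW] at this
    simpa using this
  · intro hj
    ext j
    rw [vecMul_cpxW hN w W hW]
    simpa using hj j

lemma evec_zero (hN : 0 < N) (w : Fin N → ℝ) (μ : ℂ) : evec N w μ ⟨0, hN⟩ = 1 := by
  simp [evec]

end spec

section spec2
variable {N : ℕ}

lemma evec_eig (hN : 0 < N) (w : Fin N → ℝ) (hw : ∀ j, w j ≠ 0)
    (W : Matrix (Fin N) (Fin N) ℝ)
    (hW : ∀ i j : Fin N, W i j = if (i : ℕ) = ((j : ℕ) + 1) % N then w j else 0)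
    (μ : ℂ) (hμ : μ ^ N = Pc w) :
    (evec N w μ) ᵥ* cpx W = μ • evec N w μ := by
  rw [eig_coord_iff hN w W hW]
  intro j
  have hwj : (w j : ℂ) = wext N w (j : ℕ) := by simp [wext, j.2]
  by_cases hj : (j : ℕ) + 1 < N
  · have hmod : ((j : ℕ) + 1) % N = (j : ℕ) + 1 := Nat.mod_eq_of_lt hj
    simp only [evec, hmod, hwj]
    rw [Finset.prod_range_succ, pow_succ]
    have h1 := wprod_ne w hw (j : ℕ)
    have h2 := wext_ne w hw (j : ℕ)
    field_simp
  · have hje : (j : ℕ) = N - 1 := by have := j.2; omega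
    have hNsub : N - 1 + 1 = N := by omega
    have hmod : ((j : ℕ) + 1) % N = 0 := by rw [hje, hNsub, Nat.mod_self]
    simp only [evec, hmod, hwj, hje, hNsub, Nat.mod_self]
    rw [pow_zero, Finset.range_zero, Finset.prod_empty, inv_one, one_mul]
    have hPc : Pc w = (∏ i ∈ Finset.range (N - 1), wext N w i) * wext N w (N - 1) := by
      rw [Pc, show Finset.range N = Finset.range (N - 1 + 1) from by rw [hNsub],
        Finset.prod_range_succ]
    have h1 := wprod_ne w hw (N - 1)
    have hpow : μ * μ ^ (N - 1) = μ ^ N := by rw [← pow_succ', hNsub]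
    rw [one_mul, ← mul_assoc, hpow, hμ, hPc]
    field_simp

lemma eig_scal (hN : 0 < N) (w : Fin N → ℝ) (hw : ∀ j, w j ≠ 0)
    (W : Matrix (Fin N) (Fin N) ℝ)
    (hW : ∀ i j : Fin N, W i j = if (i : ℕ) = ((j : ℕ) + 1) % N then w j else 0)
    (μ : ℂ) (u : Fin N → ℂ) (hu : u ᵥ* cpx W = μ • u) :
    ∀ j : Fin N, u j = u ⟨0, hN⟩ * evec N w μ j := by
  rw [eig_coord_iff hN w W hW] at hu
  suffices h : ∀ k (hk : k < N), u ⟨k, hk⟩ = u ⟨0, hN⟩ * evec N w μ ⟨k, hk⟩ by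
    intro j
    have := h (j : ℕ) j.2
    simpa using this
  intro k
  induction k with
  | zero => intro hk; rw [evec_zero hN w μ, mul_one]
  | succ k ih =>
    intro hk
    have hkN : k < N := by omega
    have hmod : (k + 1) % N = k + 1 := Nat.mod_eq_of_lt hk
    have hcoord := hu ⟨k, hkN⟩
    have hfin2 : (⟨(((⟨k, hkN⟩ : Fin N) : ℕ) + 1) % N, Nat.mod_lt _ hN⟩ : Fin N)
        = ⟨k+1, hk⟩ := Fin.ext (by simp [hmod])
    rw [hfin2] at hcoord
    have hwk : (w ⟨k, hkN⟩ : ℂ) ≠ 0 := by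
      simpa using hw ⟨k, hkN⟩
    have hwe : (w ⟨k, hkN⟩ : ℂ) = wext N w k := by simp [wext, hkN]
    have hup : u ⟨k+1, hk⟩ = (μ * u ⟨k, hkN⟩) / (w ⟨k, hkN⟩ : ℂ) :=
      (eq_div_iff hwk).mpr hcoord
    rw [hup, ih hkN]
    simp only [evec, hwe]
    have h1 := wprod_ne w hw k
    have h2 := wext_ne w hw k
    rw [Finset.prod_range_succ]
    rw [pow_succ]
    field_simp

end spec2

section spec3
variable {N : ℕ}

lemma evec_ne_zero (hN : 0 < N) (w : Fin N → ℝ) (μ : ℂ) : evec N w μ ≠ 0 := by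
  intro hcon
  have := congrFun hcon ⟨0, hN⟩
  rw [evec_zero hN w μ] at this
  simpa using this

lemma root_iff (hN : 0 < N) (w : Fin N → ℝ) (hw : ∀ j, w j ≠ 0)
    (W : Matrix (Fin N) (Fin N) ℝ)
    (hW : ∀ i j : Fin N, W i j = if (i : ℕ) = ((j : ℕ) + 1) % N then w j else 0)
    (μ : ℂ) : μ ∈ (cpx W).charpoly.roots.toFinset ↔ μ ^ N = Pc w := by
  rw [Multiset.mem_toFinset, Polynomial.mem_roots ((cpx W).charpoly_monic.ne_zero)]
  rw [Polynomial.IsRoot, eval_charpoly']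
  constructor
  · intro hdet
    have hdet2 : (μ • (1 : Matrix (Fin N) (Fin N) ℂ) - cpx W)ᵀ.det = 0 := by
      rwa [Matrix.det_transpose]
    obtain ⟨x, hx0, hx⟩ := (Matrix.exists_mulVec_eq_zero_iff).mpr hdet2
    rw [Matrix.mulVec_transpose] at hx
    have heig : x ᵥ* cpx W = μ • x := by
      have := hx
      rw [Matrix.vecMul_sub, vecMul_smulM, Matrix.vecMul_one, sub_eq_zero] at this
      exact this.symm
    have hscal := eig_scal hN w hw W hW μ x heig
    have hx00 : x ⟨0, hN⟩ ≠ 0 := by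
      intro hcon
      apply hx0
      ext j
      rw [hscal j, hcon, zero_mul]
      rfl
    -- wrap-around equation at j = N-1
    rw [eig_coord_iff hN w W hW] at heig
    have hlast := heig ⟨N - 1, by omega⟩
    have hNsub : N - 1 + 1 = N := by omega
    have hfin0 : (⟨(((⟨N - 1, by omega⟩ : Fin N) : ℕ) + 1) % N, Nat.mod_lt _ hN⟩ : Fin N)
        = ⟨0, hN⟩ := Fin.ext (by simp [hNsub, Nat.mod_self])
    rw [hfin0] at hlast
    rw [hscal ⟨N - 1, by omega⟩] at hlast
    -- hlast : x0 * w (N-1) = μ * (x0 * evec (N-1))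
    have hstep : (w ⟨N - 1, by omega⟩ : ℂ) = μ * evec N w μ ⟨N - 1, by omega⟩ :=
      mul_left_cancel₀ hx00 (by linear_combination hlast)
    have hsub : N - 1 < N := by omega
    have hwe : (w ⟨N - 1, by omega⟩ : ℂ) = wext N w (N - 1) := by simp [wext, hsub]
    rw [hwe] at hstep
    simp only [evec] at hstep
    have h1 := wprod_ne w hw (N - 1)
    have hpow : μ * μ ^ (N - 1) = μ ^ N := by rw [← pow_succ', hNsub]
    have hPc : Pc w = (∏ i ∈ Finset.range (N - 1), wext N w i) * wext N w (N - 1) := by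
      rw [Pc, show Finset.range N = Finset.range (N - 1 + 1) from by rw [hNsub],
        Finset.prod_range_succ]
    rw [← hpow, hPc, hstep]
    have h2 := wext_ne w hw (N - 1)
    field_simp
  · intro hpow
    rw [← Matrix.det_transpose]
    rw [← Matrix.exists_mulVec_eq_zero_iff]
    refine ⟨evec N w μ, evec_ne_zero hN w μ, ?_⟩
    rw [Matrix.mulVec_transpose, Matrix.vecMul_sub, vecMul_smulM, Matrix.vecMul_one,
      evec_eig hN w hw W hW μ hpow, sub_self]

lemma roots_card (hN : 0 < N) (w : Fin N → ℝ) (hw : ∀ j, w j ≠ 0)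
    (W : Matrix (Fin N) (Fin N) ℝ)
    (hW : ∀ i j : Fin N, W i j = if (i : ℕ) = ((j : ℕ) + 1) % N then w j else 0) :
    (cpx W).charpoly.roots.toFinset.card = N := by
  haveI : NeZero N := ⟨by omega⟩
  obtain ⟨α, hα⟩ := IsAlgClosed.exists_pow_nat_eq (Pc w) hN
  have hαne : α ≠ 0 := by
    intro hcon
    apply Pc_ne w hw
    rw [← hα, hcon, zero_pow (by omega)]
  have hζ := Complex.isPrimitiveRoot_exp N (by omega)
  set ζ := Complex.exp (2 * Real.pi * Complex.I / N) with hζdef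
  have himg : (cpx W).charpoly.roots.toFinset
      = Finset.image (fun k => ζ ^ k * α) (Finset.range N) := by
    ext μ
    rw [root_iff hN w hw W hW, Finset.mem_image]
    constructor
    · intro hμ
      have hunit : (μ / α) ^ N = 1 := by
        rw [div_pow, hμ, ← hα, div_self]
        exact pow_ne_zero _ hαne
      obtain ⟨i, hiN, hi⟩ := hζ.eq_pow_of_pow_eq_one hunit
      exact ⟨i, Finset.mem_range.mpr hiN, by rw [hi]; field_simp⟩
    · rintro ⟨k, _, rfl⟩
      rw [mul_pow, ← pow_mul, mul_comm k N, pow_mul, hζ.pow_eq_one, one_pow, one_mul, hα]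
  rw [himg, Finset.card_image_of_injOn, Finset.card_range]
  have := hζ.injOn_pow_mul hαne
  intro a ha b hb hab
  exact this (by simpa using ha) (by simpa using hb) hab

end spec3

/-! ### PBH for the networked system -/

section big
open Polynomial

lemma bigPBH {n m p N : ℕ} (hN : 0 < N) (h : ℝ)
    (A : Matrix (Fin n) (Fin n) ℝ) (B : Matrix (Fin n) (Fin p) ℝ)
    (C : Matrix (Fin m) (Fin n) ℝ) (H : Matrix (Fin n) (Fin m) ℝ)
    (W : Matrix (Fin N) (Fin N) ℝ)
    (w : Fin N → ℝ) (hw : ∀ j, w j ≠ 0)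
    (hW : ∀ i j : Fin N, W i j = if (i : ℕ) = ((j : ℕ) + 1) % N then w j else 0)
    (cond3 : ∀ θ : ℂ, ∀ v : ℂ → Fin N → ℂ, ∀ ξ : ℂ → Fin n → ℂ,
      (∀ μ ∈ ((cpx W).charpoly.roots.toFinset), v μ ≠ 0) →
      (∀ μ ∈ ((cpx W).charpoly.roots.toFinset), v μ ᵥ* cpx W = μ • v μ) →
      (∀ μ ∈ ((cpx W).charpoly.roots.toFinset),
        ξ μ ᵥ* (θ • (1 : Matrix (Fin n) (Fin n) ℂ) - Emat A H C h μ) = 0) →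
      (∃ μ ∈ ((cpx W).charpoly.roots.toFinset), ξ μ ≠ 0) →
      (fun q : Fin N × Fin n => ∑ μ ∈ ((cpx W).charpoly.roots.toFinset), v μ q.1 * ξ μ q.2) ᵥ*
        cpx (Matrix.diagonal (fun i : Fin N => if (i : ℕ) = 0 then (1 : ℝ) else 0) ⊗ₖ
          sampB A B h) ≠ 0) :
    PBH (cpx (Phis A H C W h))
      (cpx (Matrix.diagonal (fun i : Fin N => if (i : ℕ) = 0 then (1:ℝ) else 0) ⊗ₖ
        sampB A B h)) := by
  intro s V hV1 hV2
  set S := (cpx W).charpoly.roots.toFinset with hS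
  have hroot : ∀ μ ∈ S, μ ^ N = Pc w := fun μ hμ => (root_iff hN w hw W hW μ).mp hμ
  have heig : ∀ μ ∈ S, (evec N w μ) ᵥ* cpx W = μ • evec N w μ :=
    fun μ hμ => evec_eig hN w hw W hW μ (hroot μ hμ)
  have hindep : LinearIndependent ℂ (fun i : ↥S => evec N w (i : ℂ)) := by
    apply Module.End.eigenvectors_linearIndependent' (Matrix.mulVecLin (cpx W)ᵀ)
      (fun i : ↥S => (i : ℂ)) Subtype.coe_injective
    intro i
    constructor
    · rw [Module.End.mem_eigenspace_iff, Matrix.mulVecLin_apply, Matrix.mulVec_transpose]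
      exact heig i i.2
    · exact evec_ne_zero hN w _
  have hScard : S.card = N := roots_card hN w hw W hW
  have hSne : Nonempty ↥S := by
    rw [Finset.nonempty_coe_sort]
    apply Finset.card_pos.mp
    omega
  have hcardeq : Fintype.card ↥S = Module.finrank ℂ (Fin N → ℂ) := by
    rw [Fintype.card_coe, hScard]
    simp
  let bS : Module.Basis ↥S ℂ (Fin N → ℂ) := basisOfLinearIndependentOfCardEqFinrank hindep hcardeq
  have hbS : ∀ i : ↥S, bS i = evec N w (i : ℂ) := fun i => by
    rw [coe_basisOfLinearIndependentOfCardEqFinrank]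
  set ξ : ℂ → Fin n → ℂ := fun μ a =>
    if hμ : μ ∈ S then bS.repr (fun j => V (j, a)) ⟨μ, hμ⟩ else 0 with hξ
  have hdecomp : ∀ qq : Fin N × Fin n, V qq = ∑ μ ∈ S, evec N w μ qq.1 * ξ μ qq.2 := by
    rintro ⟨j, a⟩
    have h1 := bS.sum_repr (fun j => V (j, a))
    have h2 := congrFun h1 j
    simp only [Finset.sum_apply, Pi.smul_apply, smul_eq_mul] at h2
    rw [← h2, Finset.univ_eq_attach, ← Finset.sum_attach S
      (fun μ => evec N w μ j * ξ μ a)]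
    refine Finset.sum_congr rfl fun i _ => ?_
    rw [hbS i]
    simp only [hξ]
    rw [dif_pos i.2]
    simp only [Subtype.coe_eta]
    ring
  -- per-eigenvalue conditions
  set Ec := cpx (mexp (h • A)) with hEc
  set Hc := cpx (sampH A H C h) with hHc
  have hPhic : cpx (Phis A H C W h)
      = (1 : Matrix (Fin N) (Fin N) ℂ) ⊗ₖ Ec + cpx W ⊗ₖ Hc := by
    rw [Phis, cpx_add, cpx_kron, cpx_kron, cpx_one]
  set η : ℂ → Fin n → ℂ :=
    fun μ => ξ μ ᵥ* (s • (1 : Matrix (Fin n) (Fin n) ℂ) - Emat A H C h μ) with hη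
  have hVfun : V = fun qq : Fin N × Fin n => ∑ μ ∈ S, evec N w μ qq.1 * ξ μ qq.2 :=
    funext hdecomp
  have hterm : ∀ μ ∈ S,
      (fun qq : Fin N × Fin n => evec N w μ qq.1 * ξ μ qq.2) ᵥ*
        (s • (1 : Matrix (Fin N × Fin n) (Fin N × Fin n) ℂ) - cpx (Phis A H C W h))
      = fun qq : Fin N × Fin n => evec N w μ qq.1 * η μ qq.2 := by
    intro μ hμ
    rw [Matrix.vecMul_sub, hPhic, Matrix.vecMul_add]
    rw [← Matrix.one_kronecker_one (α := ℂ) (m := Fin N) (n := Fin n)]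
    rw [vecMul_smulM, kron_vecMul, kron_vecMul, kron_vecMul]
    ext qq
    simp only [Pi.sub_apply, Pi.smul_apply, smul_eq_mul, Pi.add_apply]
    rw [Matrix.vecMul_one, Matrix.vecMul_one, heig μ hμ]
    simp only [Pi.smul_apply, smul_eq_mul]
    rw [hη]
    simp only [Matrix.vecMul_sub, Emat, Matrix.vecMul_add, vecMul_smulM, Matrix.vecMul_one,
      Pi.sub_apply, Pi.add_apply, Pi.smul_apply, smul_eq_mul]
    ring
  have hsum0 : ∀ qq : Fin N × Fin n, ∑ μ ∈ S, evec N w μ qq.1 * η μ qq.2 = 0 := by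
    intro qq
    have h1 : V ᵥ* (s • (1 : Matrix (Fin N × Fin n) (Fin N × Fin n) ℂ)
        - cpx (Phis A H C W h)) = ∑ μ ∈ S, fun qq : Fin N × Fin n =>
          evec N w μ qq.1 * η μ qq.2 := by
      conv_lhs => rw [hVfun]
      have h2 : (fun qq : Fin N × Fin n => ∑ μ ∈ S, evec N w μ qq.1 * ξ μ qq.2)
          = ∑ μ ∈ S, fun qq : Fin N × Fin n => evec N w μ qq.1 * ξ μ qq.2 := by
        ext qq
        rw [Finset.sum_apply]
      rw [h2, sum_vecMulM]
      exact Finset.sum_congr rfl hterm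
    have h3 := congrFun (h1.symm.trans (by rw [hV1])) qq
    rw [Finset.sum_apply] at h3
    simp only [Pi.zero_apply] at h3
    exact h3
  have hηzero : ∀ μ ∈ S, η μ = 0 := by
    intro μ hμ
    ext b
    have hli := linearIndependent_iff'.mp hindep Finset.univ
      (fun i : ↥S => η (i : ℂ) b) ?_ ⟨μ, hμ⟩ (Finset.mem_univ _)
    · exact hli
    · ext j
      simp only [Finset.sum_apply, Pi.smul_apply, smul_eq_mul, Pi.zero_apply]
      have := hsum0 (j, b)
      rw [Finset.univ_eq_attach, Finset.sum_attach S
        (fun μ => η μ b * evec N w μ j)]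
      rw [← this]
      exact Finset.sum_congr rfl fun μ' _ => by ring
  by_cases hall0 : ∀ μ ∈ S, ξ μ = 0
  · funext qq
    rw [hdecomp qq]
    simp only [Pi.zero_apply]
    refine Finset.sum_eq_zero fun μ hμ => ?_
    rw [hall0 μ hμ]
    simp
  · push_neg at hall0
    exfalso
    apply cond3 s (fun μ => evec N w μ) ξ
      (fun μ _ => evec_ne_zero hN w μ) heig
      (fun μ hμ => hηzero μ hμ) hall0
    rw [← hVfun]
    exact hV2

end big

theorem stmt12
    (n m p N : ℕ) (hn : 0 < n) (hm : 0 < m) (hp : 0 < p) (hN : 0 < N)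
    (h : ℝ) (hh : 0 < h)
    (A : Matrix (Fin n) (Fin n) ℝ) (B : Matrix (Fin n) (Fin p) ℝ)
    (C : Matrix (Fin m) (Fin n) ℝ) (H : Matrix (Fin n) (Fin m) ℝ)
    (W : Matrix (Fin N) (Fin N) ℝ)
    (hN2 : 2 ≤ N) (w : Fin N → ℝ) (hw : ∀ j, w j ≠ 0)
    (hW : ∀ i j : Fin N, W i j = if (i : ℕ) = ((j : ℕ) + 1) % N then w j else 0)
    (cond2 : ∀ μ ∈ ((cpx W).charpoly.roots.toFinset),
      PBH (Emat A H C h μ) (cpx (sampB A B h)))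
    (cond3 : ∀ θ : ℂ, ∀ v : ℂ → Fin N → ℂ, ∀ ξ : ℂ → Fin n → ℂ,
      (∀ μ ∈ ((cpx W).charpoly.roots.toFinset), v μ ≠ 0) →
      (∀ μ ∈ ((cpx W).charpoly.roots.toFinset), v μ ᵥ* cpx W = μ • v μ) →
      (∀ μ ∈ ((cpx W).charpoly.roots.toFinset),
        ξ μ ᵥ* (θ • (1 : Matrix (Fin n) (Fin n) ℂ) - Emat A H C h μ) = 0) →
      (∃ μ ∈ ((cpx W).charpoly.roots.toFinset), ξ μ ≠ 0) →
      (fun q : Fin N × Fin n => ∑ μ ∈ ((cpx W).charpoly.roots.toFinset), v μ q.1 * ξ μ q.2) ᵥ*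
        cpx (Matrix.diagonal (fun i : Fin N => if (i : ℕ) = 0 then (1 : ℝ) else 0) ⊗ₖ
          sampB A B h) ≠ 0) :
    ((cpx W).charpoly.roots.toFinset.card = N ∧
      (∀ μ ∈ ((cpx W).charpoly.roots.toFinset), ∀ v1 v2 : Fin N → ℂ, v1 ≠ 0 →
        v1 ᵥ* cpx W = μ • v1 → v2 ᵥ* cpx W = μ • v2 → ∃ c : ℂ, v2 = c • v1)) ∧
    Controllable (Phis A H C W h)
      (Matrix.diagonal (fun i : Fin N => if (i : ℕ) = 0 then (1 : ℝ) else 0) ⊗ₖ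
        sampB A B h) := by
  refine ⟨⟨roots_card hN w hw W hW, ?_⟩, ?_⟩
  · intro μ hμ v1 v2 hv1ne hv1 hv2
    have hs1 := eig_scal hN w hw W hW μ v1 hv1
    have hs2 := eig_scal hN w hw W hW μ v2 hv2
    have hv10 : v1 ⟨0, hN⟩ ≠ 0 := by
      intro hcon
      apply hv1ne
      funext j
      rw [hs1 j, hcon, zero_mul]
      rfl
    refine ⟨v2 ⟨0, hN⟩ / v1 ⟨0, hN⟩, ?_⟩
    funext j
    rw [hs2 j]
    simp only [Pi.smul_apply, smul_eq_mul]
    rw [hs1 j]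
    field_simp
  · haveI : Nonempty (Fin N × Fin n) := ⟨(⟨0, hN⟩, ⟨0, hn⟩)⟩
    exact pbh_controllable _ _ (bigPBH hN h A B C H W w hw hW cond3)
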